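/- arXiv:2010.03709 — 2 statements merged into one kernel-verified Lean document; each statement's English description precedes it below -/
import Mathlib

section
/- Let $(G_i)_{i\in\mathbb{N}}$ be a sequence of groups with norms $\|\cdot\|_{G_i}$ and $(s_i)$ a sequence of positive reals. Suppose for all $i$: (1) $\|g\|_{G_i} \geq 1$ for all nonidentity $g \in G_i$; (2) $\mathrm{diam}(G_{i+1}) \geq \mathrm{diam}(G_i)$ (diameter with respect to the norm); (3) $s_{i+1} \geq 2 s_i \,\mathrm{diam}(G_i)$. For $g$ in the direct sum $G = \bigoplus_i G_i$ define the norm $\|g\|_s = \sum_i s_i\|g_i\|_{G_i}$ and the quasi-ultranorm $\|g\|_s^{qu} = s_h \|g_h\|_{G_h}$ where $h = h(g)$ is the largest index in the support of $g$ (and $\|1\|_s^{qu}=0$). Then for all $g \in G$: $\|g\|_s^{qu} \leq \|g\|_s \leq 2\|g\|_s^{qu}$. -/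
/-- comparison of the scaled direct sum norm with the
quasi-ultranorm under rapid growth of the scaling constants. -/
theorem stmt2 (G : ℕ → Type*) [∀ i, Group (G i)]
    (N : ∀ i, G i → ℝ) (s D : ℕ → ℝ)
    (hN0 : ∀ i g, 0 ≤ N i g)
    (hNe : ∀ i (g : G i), N i g = 0 ↔ g = 1)
    (hNi : ∀ i (g : G i), N i g⁻¹ = N i g)
    (hNt : ∀ i (g h : G i), N i (g * h) ≤ N i g + N i h)
    (hN1 : ∀ i (g : G i), g ≠ 1 → 1 ≤ N i g)
    (hD : ∀ i (g : G i), N i g ≤ D i)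
    (hDmono : ∀ i, D i ≤ D (i + 1))
    (hs : ∀ i, 0 < s i)
    (hgrow : ∀ i, 2 * s i * D i ≤ s (i + 1)) :
    ∀ g : ∀ i, G i, {i | g i ≠ 1}.Finite →
      ((g = 1 → (∑ᶠ i, s i * N i (g i)) = 0) ∧
       ∀ h : ℕ, g h ≠ 1 → (∀ j, g j ≠ 1 → j ≤ h) →
         s h * N h (g h) ≤ (∑ᶠ i, s i * N i (g i)) ∧
         (∑ᶠ i, s i * N i (g i)) ≤ 2 * (s h * N h (g h))) := by
  have hDm : Monotone D := monotone_nat_of_le_succ hDmono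
  intro g hfin
  constructor
  · intro hg1
    have : ∀ i, s i * N i (g i) = 0 := by
      intro i
      have : g i = 1 := by rw [hg1]; rfl
      rw [(hNe i (g i)).2 this, mul_zero]
    simp only [this, finsum_zero]
  · intro h hgh hmax
    -- key lemma by induction
    have key : ∀ m, (∑ i ∈ Finset.range m, s i * N i (g i)) ≤ s m ∧
        ((∀ i < m, g i = 1) → (∑ i ∈ Finset.range m, s i * N i (g i)) = 0) := by
      intro m
      induction m with
      | zero => simp [le_of_lt (hs 0)]
      | succ n ih =>
        rw [Finset.sum_range_succ]
        by_cases hgn : g n = 1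
        · have hn0 : s n * N n (g n) = 0 := by rw [(hNe n (g n)).2 hgn, mul_zero]
          rw [hn0, add_zero]
          constructor
          · by_cases hall : ∀ i < n, g i = 1
            · rw [ih.2 hall]; exact le_of_lt (hs (n + 1))
            · push_neg at hall
              obtain ⟨i, hin, hi⟩ := hall
              have hDn : 1 ≤ D n := le_trans (le_trans (hN1 i (g i) hi) (hD i (g i)))
                (hDm (le_of_lt hin))
              calc (∑ i ∈ Finset.range n, s i * N i (g i)) ≤ s n := ih.1
                _ ≤ 2 * s n * D n := by nlinarith [hs n]
                _ ≤ s (n + 1) := hgrow n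
          · intro hall
            exact ih.2 (fun i hi => hall i (Nat.lt_succ_of_lt hi))
        · constructor
          · have hDn : 1 ≤ D n := le_trans (hN1 n (g n) hgn) (hD n (g n))
            have h1 : s n * N n (g n) ≤ s n * D n :=
              mul_le_mul_of_nonneg_left (hD n (g n)) (le_of_lt (hs n))
            calc (∑ i ∈ Finset.range n, s i * N i (g i)) + s n * N n (g n)
                ≤ s n + s n * D n := add_le_add ih.1 h1
              _ ≤ 2 * s n * D n := by nlinarith [hs n]
              _ ≤ s (n + 1) := hgrow n
          · intro hall
            exact absurd (hall n (Nat.lt_succ_self n)) hgn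
    -- the finsum equals the finite sum over range (h+1)
    have hsub : Function.support (fun i => s i * N i (g i)) ⊆ ↑(Finset.range (h + 1)) := by
      intro i hi
      simp only [Function.mem_support] at hi
      have : g i ≠ 1 := by
        intro hcon
        exact hi (by rw [(hNe i (g i)).2 hcon, mul_zero])
      simpa [Nat.lt_succ_iff] using hmax i this
    rw [finsum_eq_sum_of_support_subset _ hsub]
    constructor
    · exact Finset.single_le_sum (f := fun i => s i * N i (g i))
        (fun i _ => mul_nonneg (le_of_lt (hs i)) (hN0 i (g i)))
        (Finset.self_mem_range_succ h)
    · rw [Finset.sum_range_succ]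
      have h1 : 1 ≤ N h (g h) := hN1 h (g h) hgh
      have h2 : s h ≤ s h * N h (g h) := by nlinarith [hs h]
      calc (∑ i ∈ Finset.range h, s i * N i (g i)) + s h * N h (g h)
          ≤ s h + s h * N h (g h) := add_le_add_left (key h).1 _
        _ ≤ 2 * (s h * N h (g h)) := by nlinarith
end

section
/- Let $S$ be a set and let $r$ be a reduced word over the alphabet $S \cup S^{-1}$ (i.e., $r$ contains no subword of the form $ss^{-1}$ or $s^{-1}s$). If $r$ is equal to a cyclic shift of its formal inverse $r^{-1}$, then $r$ is the empty word. -/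
/-- Letters are pairs (generator, sign); the formal inverse of a word reverses
the word and flips all signs. -/
def formalInv {S : Type*} (w : List (S × Bool)) : List (S × Bool) :=
  (w.map (fun p => (p.1, !p.2))).reverse

/-- A word is reduced if no two adjacent letters are formal inverses. -/
def IsReducedWord {S : Type*} (w : List (S × Bool)) : Prop :=
  List.Chain' (fun a b => ¬(a.1 = b.1 ∧ a.2 = !b.2)) w

lemma formalInv_append {S : Type*} (a b : List (S × Bool)) :
    formalInv (a ++ b) = formalInv b ++ formalInv a := by
  simp [formalInv]

lemma formalInv_length {S : Type*} (w : List (S × Bool)) :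
    (formalInv w).length = w.length := by simp [formalInv]

lemma selfInv_nil {S : Type*} (w : List (S × Bool))
    (hred : IsReducedWord w) (h : formalInv w = w) : w = [] := by
  by_contra hne
  have hpos : 0 < w.length := List.length_pos_iff.mpr hne
  have key : ∀ i j (hi : i < w.length) (hj : j < w.length),
      i + j + 1 = w.length → w[i] = ((w[j]).1, !(w[j]).2) := by
    intro i j hi hj hij
    have h' := List.getElem_of_eq h.symm hi
    rw [h']
    simp only [formalInv, List.getElem_reverse, List.getElem_map, List.length_map,
      List.length_reverse]
    have hx : w.length - 1 - i = j := by omega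
    simp only [hx]
  rw [IsReducedWord, List.Chain', List.isChain_iff_getElem] at hred
  rcases Nat.even_or_odd w.length with he | ho
  · obtain ⟨k, hk⟩ := he
    have hk1 : 1 ≤ k := by omega
    have h2 := key (k - 1) k (by omega) (by omega) (by omega)
    have := hred (k - 1) (by omega)
    apply this
    have hk2 : k - 1 + 1 = k := by omega
    simp only [hk2]
    rw [h2]
    exact ⟨rfl, rfl⟩
  · obtain ⟨k, hk⟩ := ho
    have h2 := key k k (by omega) (by omega) (by omega)
    have : (w[k]'(by omega)).2 = !(w[k]'(by omega)).2 := by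
      conv_lhs => rw [h2]
    simp at this

/-- a reduced word which equals a cyclic shift of its formal
inverse is empty. -/
theorem stmt5 {S : Type*} (r : List (S × Bool))
    (hred : IsReducedWord r)
    (hcyc : ∃ u v : List (S × Bool), formalInv r = u ++ v ∧ v ++ u = r) :
    r = [] := by
  obtain ⟨u, v, h1, h2⟩ := hcyc
  rw [← h2, formalInv_append] at h1
  have hlen : (formalInv u).length = u.length := formalInv_length u
  obtain ⟨hu, hv⟩ := List.append_inj h1 hlen
  rw [← h2] at hred
  rw [IsReducedWord, List.Chain', List.isChain_append] at hred
  have hu' : u = [] := selfInv_nil u hred.2.1 hu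
  have hv' : v = [] := selfInv_nil v hred.1 hv
  rw [← h2, hu', hv']
  rfl
end
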